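/- Let n ≥ 1. The number of pairs (ε, π), with ε : Fin n → {±1} a sign vector and π a permutation of Fin n, such that for every i ∈ Fin n the product of ε over the π-orbit of i equals −1, is exactly (2n−1)!! = 1·3·5···(2n−1), the double factorial of 2n−1. -/

import Mathlib

open Finset Nat

/-- The orbit (cycle) of `i` under the permutation `π`, as a finset. -/
def cycleOrbit {n : ℕ} (π : Equiv.Perm (Fin n)) (i : Fin n) : Finset (Fin n) :=
  Finset.univ.filter fun j => π.SameCycle i j

/-- `(ε, π)` has only negative cycles: the product of `ε` over every `π`-orbit is `-1`. -/
def OnlyNegativeCycles {n : ℕ} (w : (Fin n → ℤˣ) × Equiv.Perm (Fin n)) : Prop :=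
  ∀ i : Fin n, ∏ j ∈ cycleOrbit w.2 i, w.1 j = -1

namespace NegAux

open Equiv Equiv.Perm

variable {n : ℕ}

lemma mem_cycleOrbit_iff {π : Perm (Fin n)} {i j : Fin n} :
    j ∈ cycleOrbit π i ↔ π.SameCycle i j := by
  simp [cycleOrbit]

lemma cycleOrbit_eq_of_sameCycle {π : Perm (Fin n)} {i j : Fin n} (h : π.SameCycle i j) :
    cycleOrbit π i = cycleOrbit π j := by
  ext k
  simp only [mem_cycleOrbit_iff]
  exact ⟨h.symm.trans, h.trans⟩

lemma cycleOrbit_of_fixed {π : Perm (Fin n)} {i : Fin n} (h : π i = i) :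
    cycleOrbit π i = {i} := by
  ext k
  simp only [mem_cycleOrbit_iff, Finset.mem_singleton]
  exact ⟨fun hc => (hc.eq_of_left h).symm, fun hk => hk ▸ SameCycle.rfl⟩

lemma invariant_iff {π : Perm (Fin n)} {S : Finset (Fin n)}
    (h : ∀ x ∈ S, π x ∈ S) : ∀ x, x ∈ S ↔ π x ∈ S := by
  have himg : S.image π = S := Finset.eq_of_subset_of_card_le
    (fun y hy => by
      obtain ⟨x, hx, rfl⟩ := Finset.mem_image.mp hy
      exact h x hx)
    (le_of_eq (Finset.card_image_of_injective _ π.injective).symm)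
  intro x
  refine ⟨h x, fun hx => ?_⟩
  rw [← himg] at hx
  obtain ⟨y, hy, hyx⟩ := Finset.mem_image.mp hx
  rwa [← π.injective hyx]

lemma zpow_mem {π : Perm (Fin n)} {S : Finset (Fin n)}
    (h : ∀ x, x ∈ S ↔ π x ∈ S) : ∀ (k : ℤ) (x : Fin n), x ∈ S → (π ^ k) x ∈ S := by
  have hinv : ∀ x, x ∈ S → π⁻¹ x ∈ S := fun x hx => by
    rw [h (π⁻¹ x), ← Equiv.Perm.mul_apply, mul_inv_cancel, Equiv.Perm.one_apply]; exact hx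
  intro k
  induction k using Int.induction_on with
  | zero => simp
  | succ m ih =>
    intro x hx
    have : (π : Perm (Fin n)) ^ ((m : ℤ) + 1) = π ^ (m : ℤ) * π := by
      rw [zpow_add_one]
    rw [this, Equiv.Perm.mul_apply]
    exact ih _ ((h x).mp hx)
  | pred m ih =>
    intro x hx
    have : (π : Perm (Fin n)) ^ (-(m : ℤ) - 1) = π ^ (-(m : ℤ)) * π⁻¹ := by
      rw [zpow_sub_one]
    rw [this, Equiv.Perm.mul_apply]
    exact ih _ (hinv x hx)

lemma mem_of_sameCycle {π : Perm (Fin n)} {S : Finset (Fin n)}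
    (h : ∀ x ∈ S, π x ∈ S) {x y : Fin n} (hx : x ∈ S) (hxy : π.SameCycle x y) : y ∈ S := by
  obtain ⟨k, rfl⟩ := hxy
  exact zpow_mem (invariant_iff h) k x hx

/-! ### The extension monoid hom `Perm (Fin n) →* Perm (Fin (n+1))` -/

def Emh : Perm (Fin n) →* Perm (Fin (n + 1)) where
  toFun e := Equiv.Perm.decomposeFin.symm (0, e)
  map_one' := by
    ext i
    refine Fin.cases ?_ (fun j => ?_) i <;> simp
  map_mul' e₁ e₂ := by
    ext i
    refine Fin.cases ?_ (fun j => ?_) i <;> simp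

@[simp] lemma Emh_zero (e : Perm (Fin n)) : Emh e 0 = 0 := by
  simp [Emh]

@[simp] lemma Emh_succ (e : Perm (Fin n)) (i : Fin n) : Emh e i.succ = (e i).succ := by
  simp [Emh]

lemma sameCycle_Emh_succ {e : Perm (Fin n)} {i j : Fin n} :
    (Emh e).SameCycle i.succ j.succ ↔ e.SameCycle i j := by
  constructor
  · rintro ⟨k, hk⟩
    refine ⟨k, ?_⟩
    rw [← map_zpow, Emh_succ] at hk
    exact Fin.succ_injective _ hk
  · rintro ⟨k, hk⟩
    exact ⟨k, by rw [← map_zpow, Emh_succ, hk]⟩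

lemma not_sameCycle_Emh_zero {e : Perm (Fin n)} {i : Fin n} :
    ¬ (Emh e).SameCycle i.succ 0 := fun h =>
  Fin.succ_ne_zero i (h.symm.eq_of_left (Emh_zero e)).symm

lemma cycleOrbit_Emh_succ (e : Perm (Fin n)) (i : Fin n) :
    cycleOrbit (Emh e) i.succ = (cycleOrbit e i).image Fin.succ := by
  ext j
  refine Fin.cases ?_ (fun k => ?_) j
  · simp only [mem_cycleOrbit_iff, Finset.mem_image]
    constructor
    · intro h; exact absurd h not_sameCycle_Emh_zero
    · rintro ⟨x, _, hx⟩; exact absurd hx (Fin.succ_ne_zero x)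
  · simp only [mem_cycleOrbit_iff, Finset.mem_image]
    rw [sameCycle_Emh_succ]
    constructor
    · intro h; exact ⟨k, h, rfl⟩
    · rintro ⟨x, hx, hxk⟩
      rw [← Fin.succ_injective _ hxk]
      exact hx

/-! ### Inserting a point into a cycle: `g = swap a b * f` with `f a = a`, `b ≠ a`. -/

section Insert

variable {f : Perm (Fin n)} {a b : Fin n} (ha : f a = a) (hab : b ≠ a)

include ha hab

lemma g_apply_a : (swap a b * f) a = b := by
  rw [Equiv.Perm.mul_apply, ha, swap_apply_left]

lemma g_apply_of_ne {x : Fin n} (hxa : x ≠ a) (hxb : f x ≠ b) : (swap a b * f) x = f x := by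
  have hfa : f x ≠ a := fun h => hxa (f.injective (h.trans ha.symm))
  rw [Equiv.Perm.mul_apply, swap_apply_of_ne_of_ne hfa hxb]


lemma g_apply_of_eq_b {x : Fin n} (hxb : f x = b) : (swap a b * f) x = a := by
  rw [Equiv.Perm.mul_apply, hxb, swap_apply_right]

lemma not_sameCycle_b_a : ¬ f.SameCycle b a := fun h => hab (h.eq_of_right ha)

lemma sameCycle_g_b_of {x : Fin n} (hx : f.SameCycle b x) : (swap a b * f).SameCycle b x := by
  obtain ⟨i, hilt, rfl⟩ := hx.exists_pow_eq'
  clear hilt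
  induction i with
  | zero =>
    simp only [pow_zero, Equiv.Perm.one_apply]
    exact SameCycle.rfl
  | succ m ih =>
    have hm : f.SameCycle b ((f ^ m) b) := ⟨m, by simp⟩
    have hma : (f ^ m) b ≠ a := fun h => not_sameCycle_b_a ha hab (h ▸ hm)
    by_cases hmb : f ((f ^ m) b) = b
    · have : (f ^ (m + 1)) b = b := by rw [_root_.pow_succ', Equiv.Perm.mul_apply, hmb]
      rw [this]
    · have hg : (swap a b * f) ((f ^ m) b) = (f ^ (m + 1)) b := by
        rw [g_apply_of_ne ha hab hma hmb, _root_.pow_succ', Equiv.Perm.mul_apply]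
      have := (ih (hm)).apply_right (f := swap a b * f)
      rwa [hg] at this


lemma sameCycle_g_a_of {x : Fin n} (hx : f.SameCycle b x) : (swap a b * f).SameCycle a x :=
  SameCycle.trans ⟨1, by rw [zpow_one]; exact g_apply_a ha hab⟩ (sameCycle_g_b_of ha hab hx)

lemma cycleOrbit_g_a : cycleOrbit (swap a b * f) a = insert a (cycleOrbit f b) := by
  apply Finset.Subset.antisymm
  · intro x hx
    have hinv : ∀ y ∈ insert a (cycleOrbit f b), (swap a b * f) y ∈ insert a (cycleOrbit f b) := by
      intro y hy
      rcases Finset.mem_insert.mp hy with rfl | hy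
      · rw [g_apply_a ha hab]
        exact Finset.mem_insert_of_mem (mem_cycleOrbit_iff.mpr SameCycle.rfl)
      · have hby : f.SameCycle b y := mem_cycleOrbit_iff.mp hy
        have hya : y ≠ a := fun h => not_sameCycle_b_a ha hab (h ▸ hby)
        by_cases hfb : f y = b
        · rw [g_apply_of_eq_b ha hab hfb]
          exact Finset.mem_insert_self _ _
        · rw [g_apply_of_ne ha hab hya hfb]
          exact Finset.mem_insert_of_mem (mem_cycleOrbit_iff.mpr hby.apply_right)
    exact mem_of_sameCycle hinv (Finset.mem_insert_self a _) (mem_cycleOrbit_iff.mp hx)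
  · intro x hx
    rcases Finset.mem_insert.mp hx with rfl | hx
    · exact mem_cycleOrbit_iff.mpr SameCycle.rfl
    · exact mem_cycleOrbit_iff.mpr (sameCycle_g_a_of ha hab (mem_cycleOrbit_iff.mp hx))

lemma cycleOrbit_g_of_not {x : Fin n} (hx : ¬ f.SameCycle b x) (hxa : x ≠ a) :
    cycleOrbit (swap a b * f) x = cycleOrbit f x := by
  have key : ∀ y, f.SameCycle x y → (swap a b * f) y = f y := by
    intro y hy
    have hya : y ≠ a := by
      rintro rfl
      exact hxa (hy.eq_of_right ha)
    have hyb : f y ≠ b := by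
      intro hfy
      exact hx (Equiv.Perm.SameCycle.symm (hfy ▸ hy.apply_right))
    exact g_apply_of_ne ha hab hya hyb
  apply Finset.Subset.antisymm
  · intro y hy
    have hinv : ∀ z ∈ cycleOrbit f x, (swap a b * f) z ∈ cycleOrbit f x := by
      intro z hz
      rw [key z (mem_cycleOrbit_iff.mp hz)]
      exact mem_cycleOrbit_iff.mpr (mem_cycleOrbit_iff.mp hz).apply_right
    exact mem_of_sameCycle hinv (mem_cycleOrbit_iff.mpr SameCycle.rfl)
      (mem_cycleOrbit_iff.mp hy)
  · intro y hy
    have claim : ∀ m : ℕ, (swap a b * f).SameCycle x ((f ^ m) x) := by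
      intro m
      induction m with
      | zero =>
        simp only [pow_zero, Equiv.Perm.one_apply]
        exact SameCycle.rfl
      | succ m ih =>
        have hm : f.SameCycle x ((f ^ m) x) := ⟨m, by simp⟩
        have hg : (swap a b * f) ((f ^ m) x) = (f ^ (m + 1)) x := by
          rw [key _ hm, _root_.pow_succ', Equiv.Perm.mul_apply]
        have := ih.apply_right (f := swap a b * f)
        rwa [hg] at this
    obtain ⟨i, _, rfl⟩ := (mem_cycleOrbit_iff.mp hy).exists_pow_eq'
    exact mem_cycleOrbit_iff.mpr (claim i)

end Insert

lemma decomposeFin_symm_eq (p : Fin (n + 1)) (e : Perm (Fin n)) :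
    Equiv.Perm.decomposeFin.symm (p, e) = swap 0 p * Emh e := by
  ext i
  refine Fin.cases ?_ (fun j => ?_) i
  · simp [Emh, Equiv.Perm.mul_apply]
  · simp [Emh, Equiv.Perm.mul_apply]

lemma prod_insert_image (η : Fin (n + 1) → ℤˣ) (s : Finset (Fin n)) :
    ∏ j ∈ insert (0 : Fin (n + 1)) (s.image Fin.succ), η j = η 0 * ∏ j ∈ s, η j.succ := by
  rw [Finset.prod_insert (by simp [Fin.succ_ne_zero, Finset.mem_image]),
    Finset.prod_image (fun x _ y _ h => Fin.succ_injective _ h)]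

lemma onc_succ_iff (σ : Perm (Fin n)) (q : Fin n) (η : Fin (n + 1) → ℤˣ) :
    OnlyNegativeCycles (η, Equiv.Perm.decomposeFin.symm (q.succ, σ)) ↔
      OnlyNegativeCycles (Function.update (η ∘ Fin.succ) q (η 0 * η q.succ), σ) := by
  have hgE : Equiv.Perm.decomposeFin.symm ((q.succ : Fin (n + 1)), σ) = swap 0 q.succ * Emh σ :=
    decomposeFin_symm_eq _ _
  set g := Equiv.Perm.decomposeFin.symm ((q.succ : Fin (n + 1)), σ) with hgdef
  set η' := Function.update (η ∘ Fin.succ) q (η 0 * η q.succ) with hη'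
  have hmemq : q ∈ cycleOrbit σ q := mem_cycleOrbit_iff.mpr SameCycle.rfl
  have hprod_ne : ∀ j : Fin n, ¬ σ.SameCycle q j →
      ∏ k ∈ cycleOrbit σ j, η' k = ∏ k ∈ cycleOrbit σ j, η k.succ := by
    intro j hj
    apply Finset.prod_congr rfl
    intro k hk
    have hkq : k ≠ q := fun h => hj (Equiv.Perm.SameCycle.symm (h ▸ mem_cycleOrbit_iff.mp hk))
    rw [hη', Function.update_of_ne hkq]
    rfl
  have horb0 : cycleOrbit g 0 = insert 0 ((cycleOrbit σ q).image Fin.succ) := by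
    rw [hgE, cycleOrbit_g_a (Emh_zero σ) (Fin.succ_ne_zero q), cycleOrbit_Emh_succ]
  have horbne : ∀ j : Fin n, ¬ σ.SameCycle q j →
      cycleOrbit g j.succ = (cycleOrbit σ j).image Fin.succ := by
    intro j hj
    rw [hgE, cycleOrbit_g_of_not (Emh_zero σ) (Fin.succ_ne_zero q)
      (fun h => hj (sameCycle_Emh_succ.mp h)) (Fin.succ_ne_zero j), cycleOrbit_Emh_succ]
  have hkey : ∏ k ∈ cycleOrbit g 0, η k = ∏ k ∈ cycleOrbit σ q, η' k := by
    rw [horb0, prod_insert_image,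
      Finset.prod_eq_mul_prod_sdiff_singleton_of_mem hmemq η',
      Finset.prod_eq_mul_prod_sdiff_singleton_of_mem hmemq (fun k => η k.succ)]
    have h1 : η' q = η 0 * η q.succ := Function.update_self _ _ _
    have h2 : ∏ k ∈ cycleOrbit σ q \ {q}, η' k = ∏ k ∈ cycleOrbit σ q \ {q}, η k.succ := by
      apply Finset.prod_congr rfl
      intro k hk
      have hkq : k ≠ q := fun h => (Finset.mem_sdiff.mp hk).2 (Finset.mem_singleton.mpr h)
      rw [hη', Function.update_of_ne hkq]
      rfl
    rw [h1, h2, mul_assoc]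
  constructor
  · intro h i
    by_cases hqi : σ.SameCycle q i
    · rw [show cycleOrbit σ i = cycleOrbit σ q from (cycleOrbit_eq_of_sameCycle hqi).symm,
        ← hkey]
      exact h 0
    · rw [hprod_ne i hqi]
      have hi := h i.succ
      rw [horbne i hqi, Finset.prod_image (fun x _ y _ hxy => Fin.succ_injective _ hxy)] at hi
      exact hi
  · intro h i
    refine Fin.cases ?_ (fun j => ?_) i
    · rw [hkey]
      exact h q
    · by_cases hqj : σ.SameCycle q j
      · have hsc : g.SameCycle 0 j.succ := by
          rw [hgE]
          exact sameCycle_g_a_of (Emh_zero σ) (Fin.succ_ne_zero q) (sameCycle_Emh_succ.mpr hqj)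
        rw [show cycleOrbit g j.succ = cycleOrbit g 0 from
          (cycleOrbit_eq_of_sameCycle hsc).symm, hkey]
        exact h q
      · rw [horbne j hqj, Finset.prod_image (fun x _ y _ hxy => Fin.succ_injective _ hxy),
          ← hprod_ne j hqj]
        exact h j

lemma onc_zero_iff (σ : Perm (Fin n)) (η : Fin (n + 1) → ℤˣ) :
    OnlyNegativeCycles (η, Equiv.Perm.decomposeFin.symm (0, σ)) ↔
      η 0 = -1 ∧ OnlyNegativeCycles (η ∘ Fin.succ, σ) := by
  have hgE : Equiv.Perm.decomposeFin.symm ((0 : Fin (n + 1)), σ) = Emh σ := rfl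
  rw [hgE]
  constructor
  · intro h
    constructor
    · have h0 := h 0
      rwa [cycleOrbit_of_fixed (Emh_zero σ), Finset.prod_singleton] at h0
    · intro i
      have hi := h i.succ
      rwa [cycleOrbit_Emh_succ, Finset.prod_image
        (fun x _ y _ hxy => Fin.succ_injective _ hxy)] at hi
  · rintro ⟨h0, h⟩ i
    refine Fin.cases ?_ (fun j => ?_) i
    · rwa [cycleOrbit_of_fixed (Emh_zero σ), Finset.prod_singleton]
    · rw [cycleOrbit_Emh_succ, Finset.prod_image (fun x _ y _ hxy => Fin.succ_injective _ hxy)]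
      exact h j

abbrev X (n : ℕ) := {w : (Fin n → ℤˣ) × Equiv.Perm (Fin n) // OnlyNegativeCycles w}

def fwd (n : ℕ) (w : X (n + 1)) : (Option (Fin n × ℤˣ)) × X n :=
  if hp : (Equiv.Perm.decomposeFin w.1.2).1 = 0 then
    (none, ⟨(w.1.1 ∘ Fin.succ, (Equiv.Perm.decomposeFin w.1.2).2), by
      have h2 : OnlyNegativeCycles (w.1.1, w.1.2) := w.2
      rw [show w.1.2 = Equiv.Perm.decomposeFin.symm
          ((Equiv.Perm.decomposeFin w.1.2).1, (Equiv.Perm.decomposeFin w.1.2).2) from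
        (Equiv.symm_apply_apply _ _).symm, hp] at h2
      exact ((onc_zero_iff _ _).mp h2).2⟩)
  else
    (some ((Equiv.Perm.decomposeFin w.1.2).1.pred hp, w.1.1 0),
     ⟨(Function.update (w.1.1 ∘ Fin.succ) ((Equiv.Perm.decomposeFin w.1.2).1.pred hp)
        (w.1.1 0 * w.1.1 ((Equiv.Perm.decomposeFin w.1.2).1)),
       (Equiv.Perm.decomposeFin w.1.2).2), by
      have h2 : OnlyNegativeCycles (w.1.1, w.1.2) := w.2
      rw [show w.1.2 = Equiv.Perm.decomposeFin.symm
          ((Equiv.Perm.decomposeFin w.1.2).1, (Equiv.Perm.decomposeFin w.1.2).2) from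
        (Equiv.symm_apply_apply _ _).symm,
        show (Equiv.Perm.decomposeFin w.1.2).1 =
          ((Equiv.Perm.decomposeFin w.1.2).1.pred hp).succ from (Fin.succ_pred _ _).symm] at h2
      have h3 := (onc_succ_iff _ _ _).mp h2
      rwa [Fin.succ_pred] at h3⟩)

def bwd (n : ℕ) (x : (Option (Fin n × ℤˣ)) × X n) : X (n + 1) :=
  match x with
  | (none, ⟨(ε, σ), h⟩) =>
    ⟨((Fin.cases (-1) ε : ∀ _ : Fin (n + 1), ℤˣ), Equiv.Perm.decomposeFin.symm (0, σ)), by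
      refine (onc_zero_iff _ _).mpr ⟨by simp, ?_⟩
      have he : (Fin.cases (-1) ε : ∀ _ : Fin (n + 1), ℤˣ) ∘ Fin.succ = ε := by
        funext j; simp
      rwa [he]⟩
  | (some (q, u), ⟨(ε, σ), h⟩) =>
    ⟨((Fin.cases u (Function.update ε q (u * ε q)) : ∀ _ : Fin (n + 1), ℤˣ),
      Equiv.Perm.decomposeFin.symm (q.succ, σ)), by
      refine (onc_succ_iff _ _ _).mpr ?_
      have he : (Fin.cases u (Function.update ε q (u * ε q)) : ∀ _ : Fin (n + 1), ℤˣ)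
          ∘ Fin.succ = Function.update ε q (u * ε q) := by
        funext j; simp
      rw [he]
      simp only [Fin.cases_zero, Fin.cases_succ, Function.update_self]
      rw [Function.update_idem, ← mul_assoc, Int.units_mul_self, one_mul,
        Function.update_eq_self]
      exact h⟩

lemma bwd_fwd (n : ℕ) (w : X (n + 1)) : bwd n (fwd n w) = w := by
  obtain ⟨⟨η, π⟩, h⟩ := w
  have hπ : π = Equiv.Perm.decomposeFin.symm
      ((Equiv.Perm.decomposeFin π).1, (Equiv.Perm.decomposeFin π).2) :=
    (Equiv.symm_apply_apply _ _).symm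
  by_cases hp : (Equiv.Perm.decomposeFin π).1 = 0
  · have hπ0 : π 0 = 0 := by
      conv_lhs => rw [hπ]
      rw [Equiv.Perm.decomposeFin_symm_apply_zero, hp]
    have hη0 : η 0 = -1 := by
      have h0 := h 0
      rwa [cycleOrbit_of_fixed hπ0, Finset.prod_singleton] at h0
    rw [fwd, dif_pos hp, bwd]
    apply Subtype.ext
    apply Prod.ext
    · funext i
      refine Fin.cases ?_ (fun j => ?_) i <;> simp [hη0]
    · show Equiv.Perm.decomposeFin.symm (0, (Equiv.Perm.decomposeFin π).2) = π
      rw [← hp]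
      exact Equiv.symm_apply_apply _ _
  · rw [fwd, dif_neg hp, bwd]
    apply Subtype.ext
    apply Prod.ext
    · set p := (Equiv.Perm.decomposeFin π).1 with hpdef
      set qq := p.pred hp with hqq
      have hqs : qq.succ = p := Fin.succ_pred _ _
      set ε' := Function.update (η ∘ Fin.succ) qq (η 0 * η p) with hε'
      show (Fin.cases (η 0) (Function.update ε' qq (η 0 * ε' qq)) : ∀ _ : Fin (n + 1), ℤˣ) = η
      have h1 : ε' qq = η 0 * η p := Function.update_self _ _ _
      have h2 : Function.update ε' qq (η 0 * ε' qq) = η ∘ Fin.succ := by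
        rw [h1, ← mul_assoc, Int.units_mul_self, one_mul, hε', Function.update_idem]
        have : η p = (η ∘ Fin.succ) qq := by rw [Function.comp_apply, hqs]
        rw [this, Function.update_eq_self]
      rw [h2]
      funext i
      refine Fin.cases ?_ (fun j => ?_) i <;> simp
    · show Equiv.Perm.decomposeFin.symm
        (((Equiv.Perm.decomposeFin π).1.pred hp).succ, (Equiv.Perm.decomposeFin π).2) = π
      rw [Fin.succ_pred]
      exact Equiv.symm_apply_apply _ _

lemma fwd_bwd (n : ℕ) (x : (Option (Fin n × ℤˣ)) × X n) : fwd n (bwd n x) = x := by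
  obtain ⟨o, ⟨⟨ε, σ⟩, h⟩⟩ := x
  match o with
  | none =>
    have hd : Equiv.Perm.decomposeFin (Equiv.Perm.decomposeFin.symm (0, σ)) = (0, σ) :=
      Equiv.apply_symm_apply _ _
    rw [bwd, fwd]
    rw [dif_pos (by rw [hd])]
    refine Prod.ext rfl ?_
    apply Subtype.ext
    apply Prod.ext
    · show (Fin.cases (-1) ε : ∀ _ : Fin (n + 1), ℤˣ) ∘ Fin.succ = ε
      funext j; simp
    · show (Equiv.Perm.decomposeFin (Equiv.Perm.decomposeFin.symm (0, σ))).2 = σ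
      rw [hd]
  | some (q, u) =>
    have hd : Equiv.Perm.decomposeFin (Equiv.Perm.decomposeFin.symm (q.succ, σ))
        = (q.succ, σ) := Equiv.apply_symm_apply _ _
    have hp1 : (Equiv.Perm.decomposeFin (Equiv.Perm.decomposeFin.symm (q.succ, σ))).1
        = q.succ := by rw [hd]
    have hd2 : (Equiv.Perm.decomposeFin (Equiv.Perm.decomposeFin.symm (q.succ, σ))).2
        = σ := by rw [hd]
    have hpred : ∀ hh, (Equiv.Perm.decomposeFin
        (Equiv.Perm.decomposeFin.symm (q.succ, σ))).1.pred hh = q := fun hh =>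
      Fin.succ_injective _ (by rw [Fin.succ_pred, hp1])
    rw [bwd, fwd, dif_neg (by rw [hp1]; exact Fin.succ_ne_zero q)]
    refine Prod.ext ?_ ?_
    · show some (_, _) = some (q, u)
      rw [hpred]
      simp only [Fin.cases_zero]
    · apply Subtype.ext
      refine Prod.ext ?_ hd2
      show Function.update
          ((Fin.cases u (Function.update ε q (u * ε q)) : ∀ _ : Fin (n + 1), ℤˣ) ∘ Fin.succ) _ _
          = ε
      rw [hpred, hp1]
      rw [show (Fin.cases u (Function.update ε q (u * ε q)) : ∀ _ : Fin (n + 1), ℤˣ)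
          ∘ Fin.succ = Function.update ε q (u * ε q) from funext fun j => by simp]
      simp only [Fin.cases_zero, Fin.cases_succ, Function.update_self]
      rw [Function.update_idem, ← mul_assoc, Int.units_mul_self, one_mul,
        Function.update_eq_self]

def theEquiv (n : ℕ) : X (n + 1) ≃ (Option (Fin n × ℤˣ)) × X n where
  toFun := fwd n
  invFun := bwd n
  left_inv := bwd_fwd n
  right_inv := fwd_bwd n

lemma card_X_succ (n : ℕ) : Nat.card (X (n + 1)) = (2 * n + 1) * Nat.card (X n) := by
  rw [Nat.card_congr (theEquiv n), Nat.card_prod]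
  congr 1
  rw [Nat.card_eq_fintype_card]
  rw [Fintype.card_option, Fintype.card_prod, Fintype.card_fin, Fintype.card_units_int]
  ring

instance : Nonempty (X 0) := ⟨⟨(fun i => i.elim0, 1), fun i => i.elim0⟩⟩

instance : Subsingleton (X 0) := by
  constructor
  rintro ⟨⟨ε, π⟩, _⟩ ⟨⟨ε', π'⟩, _⟩
  apply Subtype.ext
  refine Prod.ext ?_ ?_
  · funext i; exact i.elim0
  · ext i; exact i.elim0

lemma card_X_zero : Nat.card (X 0) = 1 := Nat.card_unique

lemma card_X (n : ℕ) : Nat.card (X n) = (2 * n - 1)‼ := by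
  induction n with
  | zero => simp only [Nat.mul_zero, Nat.zero_sub]; exact card_X_zero
  | succ m ih =>
    rw [card_X_succ, ih]
    cases m with
    | zero => rfl
    | succ k =>
      have h1 : 2 * (k + 1 + 1) - 1 = (2 * (k + 1) - 1) + 2 := by omega
      have h2 : 2 * (k + 1) + 1 = (2 * (k + 1) - 1) + 2 := by omega
      rw [h1, h2, Nat.doubleFactorial_add_two]

end NegAux

theorem stmt_1 (n : ℕ) (hn : 1 ≤ n) :
    Nat.card {w : (Fin n → ℤˣ) × Equiv.Perm (Fin n) // OnlyNegativeCycles w}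
      = (2 * n - 1)‼ :=
  NegAux.card_X n
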